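/- arXiv:1005.0203 — 3 statements merged into one kernel-verified Lean document; each statement's English description precedes it below -/
import Mathlib

section
/- Let Ω have finite measure and suppose u is a measurable function such that |{|u| ≥ k}| ≤ C/k^s for all k > 0 (with s > 0), and ∫_Ω |∇T_k(u)|² ≤ C k^ρ for all k > 0 (with ρ > 0), where T_k denotes truncation at level k and the gradient is the weak gradient. Then |∇u| ∈ M^{2s/(ρ+s)}(Ω), i.e., there exists C' such that |{|∇u| ≥ λ}| ≤ C'/λ^{2s/(ρ+s)} for all λ > 0. -/
open MeasureTheory Set Filter

/-- Lemma 2.3 ([bdo]): if `|{|u| ≥ k}| ≤ C/k^s` for all `k > 0` and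
`∫ |∇T_k(u)|² ≤ C k^ρ` for all `k > 0`, where the weak gradient `v` of `u` satisfies
`∇T_k(u) = v·χ_{|u|<k}`, then `|∇u| = ‖v‖ ∈ M^{2s/(ρ+s)}(Ω)`. -/
theorem stmt_10 (N : ℕ) (Ω : Set (EuclideanSpace ℝ (Fin N)))
    (hΩmeas : MeasurableSet Ω) (hΩ : volume Ω < ⊤)
    (s ρ C : ℝ) (hs : 0 < s) (hρ : 0 < ρ) (hC : 0 < C)
    (u : EuclideanSpace ℝ (Fin N) → ℝ) (hu : Measurable u)
    (v : EuclideanSpace ℝ (Fin N) → EuclideanSpace ℝ (Fin N)) (hv : Measurable v)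
    (hM : ∀ k > (0 : ℝ), volume {x ∈ Ω | k ≤ |u x|} ≤ ENNReal.ofReal (C / k ^ s))
    (hG : ∀ k > (0 : ℝ),
      ∫⁻ x in Ω, ENNReal.ofReal (‖Set.indicator {x | |u x| < k} v x‖ ^ 2)
        ≤ ENNReal.ofReal (C * k ^ ρ)) :
    ∃ C' > (0 : ℝ), ∀ lam > (0 : ℝ),
      volume {x ∈ Ω | lam ≤ ‖v x‖} ≤ ENNReal.ofReal (C' / lam ^ (2 * s / (ρ + s))) := by
  refine ⟨2 * C, by linarith, ?_⟩
  intro lam hlam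
  have hρs : 0 < ρ + s := by linarith
  set k : ℝ := lam ^ (2 / (ρ + s)) with hkdef
  have hkpos : 0 < k := Real.rpow_pos_of_pos hlam _
  set B : Set (EuclideanSpace ℝ (Fin N)) := {x ∈ Ω | |u x| < k ∧ lam ≤ ‖v x‖} with hBdef
  have hBmeas : MeasurableSet B := by
    apply hΩmeas.inter
    exact (measurableSet_lt hu.abs measurable_const).inter
      (measurableSet_le measurable_const hv.norm)
  have hBsub : B ⊆ Ω := fun x hx => hx.1
  -- Chebyshev bound on B
  have cheb : ENNReal.ofReal (lam ^ 2) * volume B ≤ ENNReal.ofReal (C * k ^ ρ) := by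
    calc ENNReal.ofReal (lam ^ 2) * volume B
        = ∫⁻ _ in B, ENNReal.ofReal (lam ^ 2) := by
          rw [setLIntegral_const, mul_comm]
      _ ≤ ∫⁻ x in B, ENNReal.ofReal (‖Set.indicator {x | |u x| < k} v x‖ ^ 2) := by
          have hf : Measurable fun x =>
              ENNReal.ofReal (‖Set.indicator {x | |u x| < k} v x‖ ^ 2) :=
            ENNReal.measurable_ofReal.comp
              (((hv.indicator (measurableSet_lt hu.abs measurable_const)).norm).pow_const 2)
          refine setLIntegral_mono hf ?_
          intro x hx
          have hxu : x ∈ {x | |u x| < k} := hx.2.1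
          rw [Set.indicator_of_mem hxu]
          exact ENNReal.ofReal_le_ofReal
            (pow_le_pow_left₀ hlam.le hx.2.2 2)
      _ ≤ ∫⁻ x in Ω, ENNReal.ofReal (‖Set.indicator {x | |u x| < k} v x‖ ^ 2) :=
          lintegral_mono_set hBsub
      _ ≤ ENNReal.ofReal (C * k ^ ρ) := hG k hkpos
  have hlam2 : 0 < lam ^ 2 := by positivity
  have hBbound : volume B ≤ ENNReal.ofReal (C * k ^ ρ / lam ^ 2) := by
    rw [ENNReal.ofReal_div_of_pos hlam2]
    rw [ENNReal.le_div_iff_mul_le (Or.inl (by simp [hlam2, hlam.ne'])) (Or.inl ENNReal.ofReal_ne_top)]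
    rwa [mul_comm]
  -- splitting
  have hsplit : {x ∈ Ω | lam ≤ ‖v x‖} ⊆ {x ∈ Ω | k ≤ |u x|} ∪ B := by
    intro x hx
    rcases le_or_gt k |u x| with h | h
    · exact Or.inl ⟨hx.1, h⟩
    · exact Or.inr ⟨hx.1, h, hx.2⟩
  have hmain : volume {x ∈ Ω | lam ≤ ‖v x‖}
      ≤ ENNReal.ofReal (C / k ^ s) + ENNReal.ofReal (C * k ^ ρ / lam ^ 2) :=
    le_trans (measure_mono hsplit) (le_trans (measure_union_le _ _)
      (add_le_add (hM k hkpos) hBbound))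
  -- real number computation
  have h1 : C / k ^ s = C / lam ^ (2 * s / (ρ + s)) := by
    rw [hkdef, ← Real.rpow_mul hlam.le, show 2 / (ρ + s) * s = 2 * s / (ρ + s) by ring]
  have h2 : C * k ^ ρ / lam ^ 2 = C / lam ^ (2 * s / (ρ + s)) := by
    rw [hkdef, ← Real.rpow_mul hlam.le,
      show (lam ^ 2 : ℝ) = lam ^ (2 : ℝ) by rw [← Real.rpow_natCast lam 2]; norm_num,
      mul_div_assoc, ← Real.rpow_sub hlam,
      show 2 / (ρ + s) * ρ - 2 = -(2 * s / (ρ + s)) by field_simp; ring,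
      Real.rpow_neg hlam.le, ← div_eq_mul_inv]
  rw [h1, h2, ← ENNReal.ofReal_add (by positivity) (by positivity)] at hmain
  refine le_trans hmain (le_of_eq ?_)
  congr 1
  ring
end

section
/- Let h : [0, σ) → ℝ be continuous, increasing with h(0)=0 and h(s) → +∞ as s → σ⁻, let f ∈ L¹(Ω), f ≥ 0, and let (u_n) be measurable functions with values in [0, σ) satisfying ∫_{{s ≤ u_n < σ}} h(u_n) ≤ ∫_{{s ≤ u_n < σ}} f for every s ∈ (0, σ) and every n, and suppose sup_n |{s ≤ u_n < σ}| → 0 as s → σ⁻. Then the sequence (h(u_n)) is uniformly integrable: for every ε > 0 there is δ > 0 such that for all n and all measurable E with |E| < δ, ∫_E h(u_n) ≤ ε. -/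
open MeasureTheory Set Filter

/-- Equi-integrability of `h(u_n)` in the proof of Theorem 3: if
`∫_{s ≤ u_n < σ} h(u_n) ≤ ∫_{s ≤ u_n < σ} f` for every `s ∈ (0,σ)` and every `n`, and
`sup_n |{s ≤ u_n < σ}| → 0` as `s → σ⁻`, then `(h(u_n))` is uniformly integrable. -/
theorem stmt_12 (N : ℕ) (Ω : Set (EuclideanSpace ℝ (Fin N)))
    (hΩmeas : MeasurableSet Ω) (hΩ : volume Ω < ⊤)
    (σ : ℝ) (hσ : 0 < σ)
    (h : ℝ → ℝ) (hcont : ContinuousOn h (Set.Ico 0 σ))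
    (hmono : StrictMonoOn h (Set.Ico 0 σ)) (h0 : h 0 = 0)
    (hinf : Tendsto h (nhdsWithin σ (Set.Ico 0 σ)) atTop)
    (f : EuclideanSpace ℝ (Fin N) → ℝ) (hf : Measurable f) (hf1 : IntegrableOn f Ω)
    (hfpos : ∀ᵐ x ∂(volume.restrict Ω), 0 ≤ f x)
    (u : ℕ → EuclideanSpace ℝ (Fin N) → ℝ) (hu : ∀ n, Measurable (u n))
    (hurange : ∀ n, ∀ x, 0 ≤ u n x ∧ u n x < σ)
    (hyp : ∀ s ∈ Set.Ioo 0 σ, ∀ n : ℕ,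
      ∫⁻ x in {x ∈ Ω | s ≤ u n x}, ENNReal.ofReal (h (u n x))
        ≤ ∫⁻ x in {x ∈ Ω | s ≤ u n x}, ENNReal.ofReal (f x))
    (hsmall : Tendsto (fun s : ℝ => ⨆ n : ℕ, volume {x ∈ Ω | s ≤ u n x})
      (nhdsWithin σ (Set.Iio σ)) (nhds 0)) :
    ∀ ε > (0 : ℝ), ∃ δ > (0 : ℝ), ∀ n : ℕ, ∀ E ⊆ Ω, MeasurableSet E →
      volume E < ENNReal.ofReal δ →
      ∫⁻ x in E, ENNReal.ofReal (h (u n x)) ≤ ENNReal.ofReal ε := by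
  intro ε hε
  -- finite lintegral of f over Ω
  have hFfin : ∫⁻ x, ENNReal.ofReal (f x) ∂(volume.restrict Ω) ≠ ⊤ := by
    have h1 : ∫⁻ x, ENNReal.ofReal (f x) ∂(volume.restrict Ω)
        ≤ ∫⁻ x, (‖f x‖₊ : ENNReal) ∂(volume.restrict Ω) := by
      refine lintegral_mono fun x => ?_
      refine le_of_le_of_eq ?_ (ofReal_norm (f x))
      exact ENNReal.ofReal_le_ofReal (le_abs_self _)
    exact ne_top_of_le_ne_top hf1.2.ne h1
  -- absolute continuity
  obtain ⟨δ₁, hδ₁pos, hδ₁⟩ := exists_pos_setLIntegral_lt_of_measure_lt hFfin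
    (ε := ENNReal.ofReal (ε / 2)) (ENNReal.ofReal_pos.mpr (by positivity)).ne'
  -- choose s close to σ
  have hev1 : ∀ᶠ s in nhdsWithin σ (Set.Iio σ),
      (⨆ n : ℕ, volume {x ∈ Ω | s ≤ u n x}) < δ₁ :=
    hsmall.eventually (Filter.Tendsto.eventually_lt_const hδ₁pos tendsto_id)
  have hev2 : ∀ᶠ s in nhdsWithin σ (Set.Iio σ), (0 : ℝ) < s :=
    eventually_nhdsWithin_of_eventually_nhds (eventually_gt_nhds hσ)
  have hev3 : ∀ᶠ s in nhdsWithin σ (Set.Iio σ), s < σ :=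
    eventually_mem_nhdsWithin.mono fun s hs => hs
  obtain ⟨s, hsδ, hs0, hsσ⟩ := (hev1.and (hev2.and hev3)).exists
  obtain ⟨hs0, hsσ⟩ := hs0, hsσ
  set C := h s with hC
  have hCpos : 0 < C := by
    rw [hC, ← h0]
    exact hmono ⟨le_refl 0, hσ⟩ ⟨hs0.le, hsσ⟩ hs0
  refine ⟨ε / (2 * (C + 1)), by positivity, ?_⟩
  intro n E hEΩ hEmeas hEvol
  set S : Set (EuclideanSpace ℝ (Fin N)) := {x ∈ Ω | s ≤ u n x} with hS
  have hSmeas : MeasurableSet S := hΩmeas.inter (measurableSet_le measurable_const (hu n))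
  -- split E
  have hEsplit : E = (E ∩ {x | u n x < s}) ∪ (E ∩ {x | s ≤ u n x}) := by
    ext x; simp only [Set.mem_union, Set.mem_inter_iff, Set.mem_setOf_eq]
    constructor
    · intro hx; rcases lt_or_ge (u n x) s with h' | h'
      · exact Or.inl ⟨hx, h'⟩
      · exact Or.inr ⟨hx, h'⟩
    · rintro (⟨hx, _⟩ | ⟨hx, _⟩) <;> exact hx
  have hsum : ∫⁻ x in E, ENNReal.ofReal (h (u n x))
      ≤ (∫⁻ x in E ∩ {x | u n x < s}, ENNReal.ofReal (h (u n x)))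
        + ∫⁻ x in E ∩ {x | s ≤ u n x}, ENNReal.ofReal (h (u n x)) := by
    conv_lhs => rw [hEsplit]
    exact lintegral_union_le _ _ _
  -- first piece
  have hA : ∫⁻ x in E ∩ {x | u n x < s}, ENNReal.ofReal (h (u n x))
      ≤ ENNReal.ofReal (ε / 2) := by
    have hb : ∫⁻ x in E ∩ {x | u n x < s}, ENNReal.ofReal (h (u n x))
        ≤ ∫⁻ _ in E ∩ {x | u n x < s}, ENNReal.ofReal C := by
      refine setLIntegral_mono measurable_const fun x hx => ?_
      refine ENNReal.ofReal_le_ofReal ?_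
      exact (hmono ⟨(hurange n x).1, (hurange n x).2⟩ ⟨hs0.le, hsσ⟩ hx.2).le
    rw [setLIntegral_const] at hb
    have hvol : volume (E ∩ {x | u n x < s}) ≤ ENNReal.ofReal (ε / (2 * (C + 1))) :=
      le_trans (measure_mono Set.inter_subset_left) hEvol.le
    calc ∫⁻ x in E ∩ {x | u n x < s}, ENNReal.ofReal (h (u n x))
        ≤ ENNReal.ofReal C * ENNReal.ofReal (ε / (2 * (C + 1))) := hb.trans (by gcongr)
      _ = ENNReal.ofReal (C * (ε / (2 * (C + 1)))) := (ENNReal.ofReal_mul hCpos.le).symm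
      _ ≤ ENNReal.ofReal (ε / 2) := by
          refine ENNReal.ofReal_le_ofReal ?_
          rw [mul_div_assoc', div_le_div_iff₀ (by positivity) (by norm_num)]
          nlinarith
  -- second piece
  have hB : ∫⁻ x in E ∩ {x | s ≤ u n x}, ENNReal.ofReal (h (u n x))
      ≤ ENNReal.ofReal (ε / 2) := by
    have hsub : E ∩ {x | s ≤ u n x} ⊆ S := fun x hx => ⟨hEΩ hx.1, hx.2⟩
    have h1 : ∫⁻ x in E ∩ {x | s ≤ u n x}, ENNReal.ofReal (h (u n x))
        ≤ ∫⁻ x in S, ENNReal.ofReal (h (u n x)) := lintegral_mono_set hsub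
    have h2 := hyp s ⟨hs0, hsσ⟩ n
    have h3 : ∫⁻ x in S, ENNReal.ofReal (f x)
        = ∫⁻ x in S, ENNReal.ofReal (f x) ∂(volume.restrict Ω) := by
      rw [Measure.restrict_restrict hSmeas]
      congr 1
      rw [Set.inter_eq_left.mpr (fun x hx => hx.1)]
    have h4 : (volume.restrict Ω) S < δ₁ := by
      refine lt_of_le_of_lt ?_ hsδ
      refine le_trans (Measure.restrict_le_self S) ?_
      exact le_iSup (fun n => volume {x ∈ Ω | s ≤ u n x}) n
    exact h1.trans (h2.trans (h3.le.trans (hδ₁ S h4).le))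
  calc ∫⁻ x in E, ENNReal.ofReal (h (u n x))
      ≤ ENNReal.ofReal (ε / 2) + ENNReal.ofReal (ε / 2) :=
        hsum.trans (add_le_add hA hB)
    _ = ENNReal.ofReal ε := by rw [← ENNReal.ofReal_add (by positivity) (by positivity)]; ring_nf
end

section
/- Let s > 0, ρ > 0 and C > 0. For a measurable function u with |{|u| ≥ k}| ≤ C/k^s and ∫_Ω |∇T_k(u)|² ≤ C k^ρ for all k > 0, and for every λ > 0, choosing k = λ^{2/(ρ+s)} yields |{|∇u| ≥ λ}| ≤ C/λ^{2s/(ρ+s)} + C λ^{2ρ/(ρ+s)}/λ² = 2C/λ^{2s/(ρ+s)}. -/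
open MeasureTheory Set Filter

/-- Quantitative core of Lemma 2.3: if `|{|u| ≥ k}| ≤ C/k^s` and
`∫ |∇T_k(u)|² ≤ C k^ρ` for all `k > 0` (weak gradient `v`, `∇T_k(u) = v·χ_{|u|<k}`),
then for every `λ > 0`, the choice `k = λ^{2/(ρ+s)}` yields
`|{|∇u| ≥ λ}| ≤ 2C/λ^{2s/(ρ+s)}`. -/
theorem stmt_19 (N : ℕ) (Ω : Set (EuclideanSpace ℝ (Fin N)))
    (hΩmeas : MeasurableSet Ω) (hΩ : volume Ω < ⊤)
    (s ρ C : ℝ) (hs : 0 < s) (hρ : 0 < ρ) (hC : 0 < C)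
    (u : EuclideanSpace ℝ (Fin N) → ℝ) (hu : Measurable u)
    (v : EuclideanSpace ℝ (Fin N) → EuclideanSpace ℝ (Fin N)) (hv : Measurable v)
    (hM : ∀ k > (0 : ℝ), volume {x ∈ Ω | k ≤ |u x|} ≤ ENNReal.ofReal (C / k ^ s))
    (hG : ∀ k > (0 : ℝ),
      ∫⁻ x in Ω, ENNReal.ofReal (‖Set.indicator {x | |u x| < k} v x‖ ^ 2)
        ≤ ENNReal.ofReal (C * k ^ ρ)) :
    ∀ lam > (0 : ℝ),
      volume {x ∈ Ω | lam ≤ ‖v x‖}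
        ≤ ENNReal.ofReal (C / lam ^ (2 * s / (ρ + s)) +
            C * (lam ^ (2 / (ρ + s))) ^ ρ / lam ^ (2 : ℝ)) ∧
      ENNReal.ofReal (C / lam ^ (2 * s / (ρ + s)) +
            C * (lam ^ (2 / (ρ + s))) ^ ρ / lam ^ (2 : ℝ))
        = ENNReal.ofReal (2 * C / lam ^ (2 * s / (ρ + s))) := by
  intro lam hlam
  have hρs : 0 < ρ + s := by linarith
  set k : ℝ := lam ^ (2 / (ρ + s)) with hkdef
  have hk0 : 0 < k := Real.rpow_pos_of_pos hlam _
  -- exponent identities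
  have hks : k ^ s = lam ^ (2 * s / (ρ + s)) := by
    rw [hkdef, ← Real.rpow_mul hlam.le]
    congr 1; field_simp
  have hkρ : k ^ ρ / lam ^ (2 : ℝ) = 1 / lam ^ (2 * s / (ρ + s)) := by
    rw [hkdef, ← Real.rpow_mul hlam.le, div_eq_iff (by positivity), one_div,
      ← Real.rpow_neg hlam.le, ← Real.rpow_add hlam]
    congr 1; field_simp; ring
  -- the equality part
  have heq : C / lam ^ (2 * s / (ρ + s)) + C * (lam ^ (2 / (ρ + s))) ^ ρ / lam ^ (2 : ℝ)
      = 2 * C / lam ^ (2 * s / (ρ + s)) := by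
    have : C * (lam ^ (2 / (ρ + s))) ^ ρ / lam ^ (2 : ℝ)
        = C * (k ^ ρ / lam ^ (2 : ℝ)) := by rw [hkdef]; ring
    rw [this, hkρ]; ring
  refine ⟨?_, by rw [heq]⟩
  -- the measure estimate
  set S : Set (EuclideanSpace ℝ (Fin N)) := {x ∈ Ω | |u x| < k ∧ lam ≤ ‖v x‖} with hS
  have hSmeas : MeasurableSet S :=
    hΩmeas.inter ((measurableSet_lt (hu.abs) measurable_const).inter
      (measurableSet_le measurable_const hv.norm))
  have hsub : {x ∈ Ω | lam ≤ ‖v x‖} ⊆ {x ∈ Ω | k ≤ |u x|} ∪ S := by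
    rintro x ⟨hxΩ, hxv⟩
    rcases le_or_gt k (|u x|) with h | h
    · exact Or.inl ⟨hxΩ, h⟩
    · exact Or.inr ⟨hxΩ, h, hxv⟩
  have h1 : volume {x ∈ Ω | k ≤ |u x|} ≤ ENNReal.ofReal (C / lam ^ (2 * s / (ρ + s))) := by
    rw [← hks]; exact hM k hk0
  have h2 : volume S ≤ ENNReal.ofReal (C * (lam ^ (2 / (ρ + s))) ^ ρ / lam ^ (2 : ℝ)) := by
    have hlb : ENNReal.ofReal (lam ^ 2) * volume S
        ≤ ∫⁻ x in Ω, ENNReal.ofReal (‖Set.indicator {x | |u x| < k} v x‖ ^ 2) := by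
      calc ENNReal.ofReal (lam ^ 2) * volume S
          = ∫⁻ _ in S, ENNReal.ofReal (lam ^ 2) := (setLIntegral_const S _).symm
        _ ≤ ∫⁻ x in S, ENNReal.ofReal (‖Set.indicator {x | |u x| < k} v x‖ ^ 2) := by
            refine setLIntegral_mono' hSmeas fun x hx => ?_
            rcases hx with ⟨_, hxu, hxv⟩
            rw [Set.indicator_of_mem (by exact hxu)]
            exact ENNReal.ofReal_le_ofReal
              (by have := hlam.le; nlinarith [norm_nonneg (v x)])
        _ ≤ ∫⁻ x in Ω, ENNReal.ofReal (‖Set.indicator {x | |u x| < k} v x‖ ^ 2) :=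
            lintegral_mono_set (fun x hx => hx.1)
    have hle : ENNReal.ofReal (lam ^ 2) * volume S ≤ ENNReal.ofReal (C * k ^ ρ) :=
      hlb.trans (hG k hk0)
    have hlam2 : (0 : ℝ) < lam ^ 2 := by positivity
    have hle' : volume S * ENNReal.ofReal (lam ^ 2) ≤ ENNReal.ofReal (C * k ^ ρ) := by
      rw [mul_comm]; exact hle
    have := (ENNReal.le_div_iff_mul_le (Or.inl (ne_of_gt (ENNReal.ofReal_pos.2 hlam2)))
      (Or.inl ENNReal.ofReal_ne_top)).2 hle'
    refine this.trans (le_of_eq ?_)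
    rw [← ENNReal.ofReal_div_of_pos hlam2]
    congr 1
    rw [← hkdef, ← Real.rpow_natCast lam 2]
    norm_num
  calc volume {x ∈ Ω | lam ≤ ‖v x‖} ≤ volume ({x ∈ Ω | k ≤ |u x|} ∪ S) :=
        measure_mono hsub
    _ ≤ volume {x ∈ Ω | k ≤ |u x|} + volume S := measure_union_le _ _
    _ ≤ ENNReal.ofReal (C / lam ^ (2 * s / (ρ + s))) +
        ENNReal.ofReal (C * (lam ^ (2 / (ρ + s))) ^ ρ / lam ^ (2 : ℝ)) := add_le_add h1 h2
    _ = _ := (ENNReal.ofReal_add (by positivity) (by positivity)).symm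
end
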